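/- Collapsing of intermediate exceptional rays between consecutive h-nodes: For every 1 ≤ j ≤ n−1 and every integer l with i_j ≤ l ≤ i_{j+1}, one has (i_{j+1} − i_j)·[h_l] = (i_{j+1} − l)·[h_{i_j}] + (l − i_j)·[h_{i_{j+1}}]; consequently the cone generated by the set {[h_l] : i_j ≤ l ≤ i_{j+1}} equals ℝ≥0⟨[h_{i_j}], [h_{i_{j+1}}]⟩. -/

import Mathlib

/-- The divisorial valuation ray `[h_l] = −l·∑_{k : i_k < l} e_k − ∑_{k : i_k ≥ l} i_k e_k`. -/
noncomputable def Hl (n : ℕ) (i : ℕ → ℤ) (l : ℤ) : Fin (n + 1) → ℝ :=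
  fun k => if i (k : ℕ) < l then (-l : ℝ) else (-(i (k : ℕ)) : ℝ)

/-- The cone `ℝ≥0⟨x, y⟩ = {αx + βy : α, β ≥ 0}`. -/
def cone2 {m : ℕ} (x y : Fin m → ℝ) : Set (Fin m → ℝ) :=
  {z | ∃ α β : ℝ, 0 ≤ α ∧ 0 ≤ β ∧ z = α • x + β • y}

/-- The cone generated by a set `S`: all finite nonnegative combinations of elements of `S`. -/
def coneGen {m : ℕ} (S : Set (Fin m → ℝ)) : Set (Fin m → ℝ) :=
  {z | ∃ (F : Finset (Fin m → ℝ)) (c : (Fin m → ℝ) → ℝ),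
        ↑F ⊆ S ∧ (∀ w ∈ F, 0 ≤ c w) ∧ z = ∑ w ∈ F, c w • w}

/-- Collapsing of intermediate exceptional rays between consecutive h-nodes:
for `1 ≤ j ≤ n-1` and `i_j ≤ l ≤ i_{j+1}`,
`(i_{j+1} − i_j)·[h_l] = (i_{j+1} − l)·[h_{i_j}] + (l − i_j)·[h_{i_{j+1}}]`; consequently
the cone generated by `{[h_l] : i_j ≤ l ≤ i_{j+1}}` equals `ℝ≥0⟨[h_{i_j}], [h_{i_{j+1}}]⟩`. -/
theorem collapsing_intermediate_h_rays
    (n : ℕ) (hn : 4 ≤ n) (i : ℕ → ℤ)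
    (hi0 : i 0 = 0)
    (hmono : ∀ k, k < n → i k < i (k + 1))
    (hgcd : Finset.gcd (Finset.Icc 1 n) i = 1)
    (j : ℕ) (hj1 : 1 ≤ j) (hjn : j ≤ n - 1) :
    (∀ l : ℤ, i j ≤ l → l ≤ i (j + 1) →
      ((i (j + 1) : ℝ) - (i j : ℝ)) • Hl n i l
        = ((i (j + 1) : ℝ) - (l : ℝ)) • Hl n i (i j)
          + ((l : ℝ) - (i j : ℝ)) • Hl n i (i (j + 1)))
    ∧ coneGen {z | ∃ l : ℤ, i j ≤ l ∧ l ≤ i (j + 1) ∧ z = Hl n i l}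
        = cone2 (Hl n i (i j)) (Hl n i (i (j + 1))) := by
  have hjn' : j + 1 ≤ n := by omega
  -- strict monotonicity on [0, n]
  have hmono' : ∀ a b : ℕ, b ≤ n → a < b → i a < i b := by
    intro a b hb hab
    induction b with
    | zero => omega
    | succ m ih =>
      rcases Nat.lt_succ_iff_lt_or_eq.mp hab with h | h
      · exact lt_trans (ih (by omega) h) (hmono m (by omega))
      · subst h; exact hmono a (by omega)
  have hij : i j < i (j + 1) := hmono j (by omega)
  -- the key linear identity
  have key : ∀ l : ℤ, i j ≤ l → l ≤ i (j + 1) →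
      ((i (j + 1) : ℝ) - (i j : ℝ)) • Hl n i l
        = ((i (j + 1) : ℝ) - (l : ℝ)) • Hl n i (i j)
          + ((l : ℝ) - (i j : ℝ)) • Hl n i (i (j + 1)) := by
    intro l hl1 hl2
    funext k
    have hkn : (k : ℕ) ≤ n := Nat.lt_succ_iff.mp k.isLt
    have hle : i (k : ℕ) < i (j + 1) → i (k : ℕ) ≤ i j := by
      intro h
      by_contra hc
      push_neg at hc
      have hjk : j < (k : ℕ) := by
        by_contra hjk
        push_neg at hjk
        have : i (k : ℕ) ≤ i j := by
          rcases lt_or_eq_of_le hjk with h' | h'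
          · exact (hmono' _ _ (by omega) h').le
          · exact le_of_eq (congrArg i h')
        omega
      have hge : i (j + 1) ≤ i (k : ℕ) := by
        rcases lt_or_eq_of_le (Nat.succ_le_of_lt hjk) with h' | h'
        · exact (hmono' _ _ hkn h').le
        · exact le_of_eq (congrArg i (by omega))
      omega
    simp only [Hl, Pi.smul_apply, Pi.add_apply, smul_eq_mul]
    by_cases c2 : i (k : ℕ) < i j
    · have c1 : i (k : ℕ) < l := by omega
      have c3 : i (k : ℕ) < i (j + 1) := by omega
      rw [if_pos c1, if_pos c2, if_pos c3]; ring
    · by_cases c3 : i (k : ℕ) < i (j + 1)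
      · have hk : i (k : ℕ) = i j := le_antisymm (hle c3) (not_lt.mp c2)
        by_cases c1 : i (k : ℕ) < l
        · rw [if_pos c1, if_neg c2, if_pos c3, hk]; ring
        · have hl : l = i j := by omega
          rw [if_neg c1, if_neg c2, if_pos c3, hk, hl]; ring
      · have c1 : ¬ i (k : ℕ) < l := by omega
        rw [if_neg c1, if_neg c2, if_neg c3]; ring
  refine ⟨key, ?_⟩
  have hdR : (0 : ℝ) < (i (j + 1) : ℝ) - (i j : ℝ) := by
    have : (i j : ℝ) < (i (j + 1) : ℝ) := by exact_mod_cast hij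
    linarith
  have hdne : ((i (j + 1) : ℝ) - (i j : ℝ)) ≠ 0 := ne_of_gt hdR
  -- decomposition of each Hl l with nonnegative coefficients
  have decomp : ∀ l : ℤ, i j ≤ l → l ≤ i (j + 1) →
      Hl n i l
        = (((i (j + 1) : ℝ) - (l : ℝ)) / ((i (j + 1) : ℝ) - (i j : ℝ))) • Hl n i (i j)
          + (((l : ℝ) - (i j : ℝ)) / ((i (j + 1) : ℝ) - (i j : ℝ))) • Hl n i (i (j + 1)) := by
    intro l h1 h2
    have hk := key l h1 h2
    calc Hl n i l
        = (((i (j + 1) : ℝ) - (i j : ℝ))⁻¹ * ((i (j + 1) : ℝ) - (i j : ℝ))) • Hl n i l := by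
          rw [inv_mul_cancel₀ hdne, one_smul]
      _ = (((i (j + 1) : ℝ) - (i j : ℝ))⁻¹) • (((i (j + 1) : ℝ) - (i j : ℝ)) • Hl n i l) := by
          rw [mul_smul]
      _ = _ := by
          rw [hk, smul_add, smul_smul, smul_smul, div_eq_inv_mul, div_eq_inv_mul]
  set x := Hl n i (i j) with hx
  set y := Hl n i (i (j + 1)) with hy
  have mem_of_S : ∀ w ∈ {z | ∃ l : ℤ, i j ≤ l ∧ l ≤ i (j + 1) ∧ z = Hl n i l},
      w ∈ cone2 x y := by
    rintro w ⟨l, h1, h2, rfl⟩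
    refine ⟨((i (j + 1) : ℝ) - (l : ℝ)) / ((i (j + 1) : ℝ) - (i j : ℝ)),
           ((l : ℝ) - (i j : ℝ)) / ((i (j + 1) : ℝ) - (i j : ℝ)), ?_, ?_, decomp l h1 h2⟩
    · apply div_nonneg _ hdR.le
      have : (l : ℝ) ≤ (i (j + 1) : ℝ) := by exact_mod_cast h2
      linarith
    · apply div_nonneg _ hdR.le
      have : (i j : ℝ) ≤ (l : ℝ) := by exact_mod_cast h1
      linarith
  have smul_mem : ∀ (t : ℝ), 0 ≤ t → ∀ w ∈ cone2 x y, t • w ∈ cone2 x y := by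
    rintro t ht w ⟨a, b, ha, hb, rfl⟩
    exact ⟨t * a, t * b, mul_nonneg ht ha, mul_nonneg ht hb,
      by rw [smul_add, smul_smul, smul_smul]⟩
  have hxy : x ≠ y := by
    intro h
    have hjlt : j < n + 1 := by omega
    have h2 := congrFun h ⟨j, hjlt⟩
    simp only [hx, hy, Hl] at h2
    rw [if_neg (lt_irrefl _), if_pos hij] at h2
    have : (i j : ℝ) = (i (j + 1) : ℝ) := by linarith [h2]
    have : i j = i (j + 1) := by exact_mod_cast this
    omega
  ext z
  constructor
  · rintro ⟨F, c, hFS, hc, rfl⟩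
    refine Finset.sum_induction _ (· ∈ cone2 x y) ?_ ?_ ?_
    · rintro a b ⟨a1, b1, ha1, hb1, rfl⟩ ⟨a2, b2, ha2, hb2, rfl⟩
      exact ⟨a1 + a2, b1 + b2, by linarith, by linarith,
        by rw [add_smul, add_smul]; abel⟩
    · exact ⟨0, 0, le_rfl, le_rfl, by simp⟩
    · intro w hw
      exact smul_mem (c w) (hc w hw) w (mem_of_S w (hFS hw))
  · rintro ⟨α, β, hα, hβ, rfl⟩
    classical
    refine ⟨{x, y}, fun w => if w = x then α else β, ?_, ?_, ?_⟩
    · intro w hw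
      simp only [Finset.coe_insert, Finset.coe_singleton, Set.mem_insert_iff,
        Set.mem_singleton_iff] at hw
      rcases hw with rfl | rfl
      · exact ⟨i j, le_rfl, hij.le, rfl⟩
      · exact ⟨i (j + 1), hij.le, le_rfl, rfl⟩
    · intro w _
      dsimp only
      split_ifs with h
      · exact hα
      · exact hβ
    · rw [Finset.sum_pair hxy]
      dsimp only
      rw [if_pos rfl, if_neg hxy.symm]
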